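/- Let a, b, λ ∈ ℂ with a ≠ 0 and λ ≠ 0, and define Q : ℂ∖{0} → ℂ by Q(z) = (a·z⁶ + b·z³ + λ)/z². Assume the set C = {z ∈ ℂ : z ≠ 0 and the derivative of Q at z is 0} has exactly 6 elements and the image Q(C) has exactly 3 elements. Then b = 0, and for every s ∈ ℂ with a·s³ = 1 and every z ∈ ℂ with z ≠ 0, one has Q(s·z)/s = z⁴ + (a·λ)/z². (Q is linearly conjugate to a map of the McMullen family M_μ(z) = z⁴ + μ/z², with μ = a·λ.) -/

import Mathlib

set_option maxHeartbeats 2000000 in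
/-- Rigidity of McMullen's family: a degree 6 rational map
`Q(z) = (az⁶ + bz³ + λ)/z²` (with `aλ ≠ 0`) having exactly 6 critical points in `ℂ \ {0}`
mapped onto exactly 3 critical values satisfies `b = 0` and is linearly conjugate to the
McMullen map `M_μ(z) = z⁴ + μ/z²` with `μ = aλ`. -/
theorem stmt_13 (a b lam : ℂ) (ha : a ≠ 0) (hlam : lam ≠ 0)
    (Q : ℂ → ℂ) (hQ : ∀ z, Q z = (a*z^6 + b*z^3 + lam)/z^2)
    (C : Set ℂ) (hC : C = {z : ℂ | z ≠ 0 ∧ deriv Q z = 0})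
    (h6 : C.ncard = 6) (h3 : (Q '' C).ncard = 3) :
    b = 0 ∧ ∀ s : ℂ, a*s^3 = 1 → ∀ z : ℂ, z ≠ 0 →
      Q (s*z) / s = z^4 + (a*lam)/z^2 := by
  -- a primitive cube root of unity
  obtain ⟨ξ, hξ, hξ3, hξ1⟩ : ∃ ξ : ℂ, ξ^2 + ξ + 1 = 0 ∧ ξ^3 = 1 ∧ ξ ≠ 1 := by
    have h := Complex.isPrimitiveRoot_exp 3 (by norm_num)
    refine ⟨_, ?_, h.pow_eq_one, h.ne_one (by norm_num)⟩
    have h3' := h.pow_eq_one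
    have h1 : Complex.exp (2*Real.pi*Complex.I/3) ≠ 1 := h.ne_one (by norm_num)
    have hfac : (Complex.exp (2*Real.pi*Complex.I/3) - 1) *
        (Complex.exp (2*Real.pi*Complex.I/3)^2 + Complex.exp (2*Real.pi*Complex.I/3) + 1) = 0 := by
      linear_combination h3'
    rcases mul_eq_zero.1 hfac with h' | h'
    · exact absurd (sub_eq_zero.1 h') h1
    · exact h'
  have hξ0 : ξ ≠ 0 := by
    intro h; rw [h] at hξ3; norm_num at hξ3
  have hξ21 : ξ^2 ≠ 1 := by
    intro h
    apply hξ1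
    have h' : ξ^3 = ξ * ξ^2 := by ring
    rw [h, mul_one] at h'
    rw [← h', hξ3]
  have hξξ2 : ξ ≠ ξ^2 := by
    intro h
    apply hξ21
    calc ξ^2 = ξ*ξ := by ring
    _ = ξ^2*ξ := by rw [← h]
    _ = ξ^3 := by ring
    _ = 1 := hξ3
  -- derivative of Q
  have hderiv : ∀ z : ℂ, z ≠ 0 → deriv Q z = (4*a*z^6 + b*z^3 - 2*lam)/z^3 := by
    intro z hz
    have hQf : Q = fun z => (a*z^6 + b*z^3 + lam)/z^2 := funext hQ
    have hnum : HasDerivAt (fun z : ℂ => a*z^6 + b*z^3 + lam) (6*a*z^5 + 3*b*z^2) z := by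
      have h1 : HasDerivAt (fun z : ℂ => z^6) (6*z^5) z := by
        simpa using hasDerivAt_pow 6 z
      have h2 : HasDerivAt (fun z : ℂ => z^3) (3*z^2) z := by
        simpa using hasDerivAt_pow 3 z
      have := ((h1.const_mul a).add (h2.const_mul b)).add_const lam
      rw [show 6*a*z^5 + 3*b*z^2 = a*(6*z^5) + b*(3*z^2) by ring]; exact this
    have hden : HasDerivAt (fun z : ℂ => z^2) (2*z) z := by
      simpa using hasDerivAt_pow 2 z
    have h := hnum.div hden (pow_ne_zero 2 hz)
    rw [hQf, show (fun z : ℂ => (a*z^6 + b*z^3 + lam)/z^2) = ((fun z : ℂ => a*z^6 + b*z^3 + lam) / fun z => z^2) from rfl, h.deriv]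
    field_simp
    ring
  -- the two roots of the critical quadratic 4aw² + bw - 2λ
  obtain ⟨w1, w2, hb4, hl2⟩ : ∃ w1 w2 : ℂ,
      4*a*(w1+w2) = -b ∧ 2*a*(w1*w2) = -lam := by
    obtain ⟨d, hd⟩ : ∃ d : ℂ, d^2 = b^2 + 32*a*lam :=
      IsAlgClosed.exists_pow_nat_eq _ (n := 2) (by norm_num)
    refine ⟨(-b + d)/(8*a), (-b - d)/(8*a), ?_, ?_⟩
    · field_simp; ring
    · field_simp; linear_combination (-2)*hd
  have hw10 : w1 ≠ 0 := by
    intro h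
    have h2 := hl2
    rw [h] at h2
    simp at h2
    exact hlam h2
  have hw20 : w2 ≠ 0 := by
    intro h
    have h2 := hl2
    rw [h] at h2
    simp at h2
    exact hlam h2
  obtain ⟨c1, hc1⟩ : ∃ c : ℂ, c^3 = w1 :=
    IsAlgClosed.exists_pow_nat_eq _ (n := 3) (by norm_num)
  obtain ⟨c2, hc2⟩ : ∃ c : ℂ, c^3 = w2 :=
    IsAlgClosed.exists_pow_nat_eq _ (n := 3) (by norm_num)
  have hc10 : c1 ≠ 0 := by
    intro h; apply hw10; rw [← hc1, h]; ring
  have hc20 : c2 ≠ 0 := by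
    intro h; apply hw20; rw [← hc2, h]; ring
  have hq1 : 4*a*c1^6 + b*c1^3 - 2*lam = 0 := by
    linear_combination (4*a*(c1^3+w1)+b)*hc1 + w1*hb4 + (-2)*hl2
  have hq2 : 4*a*c2^6 + b*c2^3 - 2*lam = 0 := by
    linear_combination (4*a*(c2^3+w2)+b)*hc2 + w2*hb4 + (-2)*hl2
  -- cube factorization helper
  have ecube : ∀ z c : ℂ, z^3 - c^3 = (z-c)*(z-ξ*c)*(z-ξ^2*c) := by
    intro z c
    linear_combination (c*z^2 - c^2*z) * hξ + (c^3 - c^2*z) * hξ3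
  -- factorization of the critical polynomial
  have hfact : ∀ z : ℂ, 4*a*z^6 + b*z^3 - 2*lam
      = 4*a*((z-c1)*(z-ξ*c1)*(z-ξ^2*c1))*((z-c2)*(z-ξ*c2)*(z-ξ^2*c2)) := by
    intro z
    have e3 : 4*a*z^6 + b*z^3 - 2*lam = 4*a*(z^3-c1^3)*(z^3-c2^3) := by
      linear_combination z^3*hb4 + (-2)*hl2 + 4*a*(z^3-c2^3)*hc1 + 4*a*(z^3-w1)*hc2
    rw [e3, ecube z c1, ecube z c2]
    try ring
  -- explicit description of C
  have hCset : C = {c1, ξ*c1, ξ^2*c1, c2, ξ*c2, ξ^2*c2} := by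
    ext z
    rw [hC]
    simp only [Set.mem_setOf_eq, Set.mem_insert_iff, Set.mem_singleton_iff]
    constructor
    · rintro ⟨hz, hdz⟩
      rw [hderiv z hz, div_eq_zero_iff] at hdz
      have hroot : 4*a*z^6 + b*z^3 - 2*lam = 0 :=
        hdz.resolve_right (pow_ne_zero _ hz)
      rw [hfact z] at hroot
      have h4 : (4:ℂ) ≠ 0 := by norm_num
      simp only [mul_eq_zero, sub_eq_zero] at hroot
      tauto
    · have key : ∀ u : ℂ, u ≠ 0 → 4*a*u^6 + b*u^3 - 2*lam = 0 →
          (u ≠ 0 ∧ deriv Q u = 0) := by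
        intro u hu hru
        refine ⟨hu, ?_⟩
        rw [hderiv u hu, div_eq_zero_iff]
        exact Or.inl hru
      rintro (rfl|rfl|rfl|rfl|rfl|rfl)
      · exact key _ hc10 (by rw [hfact]; ring)
      · exact key _ (mul_ne_zero hξ0 hc10) (by rw [hfact]; ring)
      · exact key _ (mul_ne_zero (pow_ne_zero _ hξ0) hc10) (by rw [hfact]; ring)
      · exact key _ hc20 (by rw [hfact]; ring)
      · exact key _ (mul_ne_zero hξ0 hc20) (by rw [hfact]; ring)
      · exact key _ (mul_ne_zero (pow_ne_zero _ hξ0) hc20) (by rw [hfact]; ring)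
  -- Q is equivariant under multiplication by ξ
  have hQξ : ∀ z : ℂ, z ≠ 0 → Q (ξ*z) = ξ * Q z := by
    intro z hz
    rw [hQ, hQ]
    field_simp
    linear_combination (a*z^6*ξ^3 - lam) * hξ3
  have hQξ2 : ∀ z : ℂ, z ≠ 0 → Q (ξ^2*z) = ξ^2 * Q z := by
    intro z hz
    rw [hQ, hQ]
    field_simp
    linear_combination (a*z^6*ξ^6*(ξ^3+1) - lam*(ξ^3+1)) * hξ3
  -- image description
  have himg : Q '' C = {Q c1, ξ*Q c1, ξ^2*Q c1, Q c2, ξ*Q c2, ξ^2*Q c2} := by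
    rw [hCset]
    simp only [Set.image_insert_eq, Set.image_singleton,
      hQξ _ hc10, hQξ2 _ hc10, hQξ _ hc20, hQξ2 _ hc20]
  -- six distinct critical points force w1 ≠ w2
  have hww : w1 ≠ w2 := by
    intro h
    have hsub : C ⊆ {c1, ξ*c1, ξ^2*c1} := by
      have mem3 : ∀ z : ℂ, z^3 = c1^3 → z ∈ ({c1, ξ*c1, ξ^2*c1} : Set ℂ) := by
        intro z hz
        have hzero : (z-c1)*(z-ξ*c1)*(z-ξ^2*c1) = 0 := by
          rw [← ecube z c1]; linear_combination hz
        simp only [Set.mem_insert_iff, Set.mem_singleton_iff]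
        rcases mul_eq_zero.1 hzero with h' | h'
        · rcases mul_eq_zero.1 h' with h'' | h''
          · exact Or.inl (sub_eq_zero.1 h'')
          · exact Or.inr (Or.inl (sub_eq_zero.1 h''))
        · exact Or.inr (Or.inr (sub_eq_zero.1 h'))
      have hc2c1 : c2^3 = c1^3 := by rw [hc1, hc2, h]
      rw [hCset]
      rintro z (rfl|rfl|rfl|rfl|rfl|rfl)
      · exact mem3 _ rfl
      · exact mem3 _ (by rw [mul_pow, hξ3, one_mul])
      · exact mem3 _ (by rw [mul_pow, ← pow_mul]; norm_num [show ξ^6 = 1 by rw [show (6:ℕ) = 3*2 by norm_num, pow_mul, hξ3, one_pow]])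
      · exact mem3 _ hc2c1
      · exact mem3 _ (by rw [mul_pow, hξ3, one_mul, hc2c1])
      · exact mem3 _ (by rw [mul_pow, ← pow_mul, hc2c1]; norm_num [show ξ^6 = 1 by rw [show (6:ℕ) = 3*2 by norm_num, pow_mul, hξ3, one_pow]])
    have hle : C.ncard ≤ 3 := by
      have f1 : ({ξ^2*c1} : Set ℂ).Finite := Set.finite_singleton _
      have f2 : ({ξ*c1, ξ^2*c1} : Set ℂ).Finite := f1.insert _
      have f3 : ({c1, ξ*c1, ξ^2*c1} : Set ℂ).Finite := f2.insert _
      refine le_trans (Set.ncard_le_ncard hsub f3) ?_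
      refine le_trans (Set.ncard_insert_le _ _) ?_
      have : ({ξ*c1, ξ^2*c1} : Set ℂ).ncard ≤ 2 := by
        refine le_trans (Set.ncard_insert_le _ _) ?_
        simp [Set.ncard_singleton]
      omega
    omega
  -- from three critical values: Q c1 ^ 3 = Q c2 ^ 3
  have hVcube : (Q c1)^3 = (Q c2)^3 := by
    by_contra hne
    have himgfin : (Q '' C).Finite := by
      rw [himg]
      exact (((((Set.finite_singleton _).insert _).insert _).insert _).insert _).insert _
    -- helper: a 4-element subset gives a contradiction
    have helper : ∀ x y : ℂ, y ≠ 0 → x^3 ≠ y^3 →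
        ({x, y, ξ*y, ξ^2*y} : Set ℂ) ⊆ Q '' C → False := by
      intro x y hy hxy hsub
      have d1 : x ≠ y := fun h => hxy (by rw [h])
      have d2 : x ≠ ξ*y := fun h => hxy (by rw [h, mul_pow, hξ3, one_mul])
      have d3 : x ≠ ξ^2*y := fun h => hxy (by
        rw [h, mul_pow, ← pow_mul]
        norm_num [show ξ^6 = 1 by rw [show (6:ℕ) = 3*2 by norm_num, pow_mul, hξ3, one_pow]])
      have d4 : y ≠ ξ*y := by
        intro h
        apply hξ1
        have hz' : (1 - ξ) * y = 0 := by linear_combination h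
        rcases mul_eq_zero.1 hz' with h' | h'
        · linear_combination -h'
        · exact absurd h' hy
      have d5 : y ≠ ξ^2*y := by
        intro h
        apply hξ21
        have : (1 - ξ^2) * y = 0 := by linear_combination h
        rcases mul_eq_zero.1 this with h' | h'
        · linear_combination -h'
        · exact absurd h' hy
      have d6 : ξ*y ≠ ξ^2*y := by
        intro h
        apply hξξ2
        have : (ξ - ξ^2) * y = 0 := by linear_combination h
        rcases mul_eq_zero.1 this with h' | h'
        · linear_combination h'
        · exact absurd h' hy
      have hncard4 : ({x, y, ξ*y, ξ^2*y} : Set ℂ).ncard = 4 := by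
        have f1 : ({ξ^2*y} : Set ℂ).Finite := Set.finite_singleton _
        have f2 : ({ξ*y, ξ^2*y} : Set ℂ).Finite := f1.insert _
        have f3 : ({y, ξ*y, ξ^2*y} : Set ℂ).Finite := f2.insert _
        rw [Set.ncard_insert_of_notMem (by simp [d1, d2, d3]) f3,
            Set.ncard_insert_of_notMem (by simp [d4, d5]) f2,
            Set.ncard_insert_of_notMem (by simp [d6]) f1,
            Set.ncard_singleton]
      have := Set.ncard_le_ncard hsub himgfin
      rw [hncard4, h3] at this
      omega
    by_cases hV2 : Q c2 = 0
    · have hV1 : Q c1 ≠ 0 := by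
        intro h; apply hne; rw [h, hV2]
      refine helper (Q c2) (Q c1) hV1 ?_ ?_
      · intro h; exact hne h.symm
      · rw [himg]
        intro v hv
        simp only [Set.mem_insert_iff, Set.mem_singleton_iff] at hv ⊢
        tauto
    · refine helper (Q c1) (Q c2) hV2 hne ?_
      rw [himg]
      intro v hv
      simp only [Set.mem_insert_iff, Set.mem_singleton_iff] at hv ⊢
      tauto
  -- algebra: deduce b = 0
  have hA1 : 64*(a*c1^6 + b*c1^3 + lam)^3 = 27*(2*lam + b*c1^3)^3 := by
    linear_combination ((4*a*c1^6+b*c1^3-2*lam)^2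
      + 9*(4*a*c1^6+b*c1^3-2*lam)*(2*lam+b*c1^3) + 27*(2*lam+b*c1^3)^2) * hq1
  have hA2 : 64*(a*c2^6 + b*c2^3 + lam)^3 = 27*(2*lam + b*c2^3)^3 := by
    linear_combination ((4*a*c2^6+b*c2^3-2*lam)^2
      + 9*(4*a*c2^6+b*c2^3-2*lam)*(2*lam+b*c2^3) + 27*(2*lam+b*c2^3)^2) * hq2
  have hQc1 : Q c1 * c1^2 = a*c1^6 + b*c1^3 + lam := by
    rw [hQ c1]; field_simp
  have hQc2 : Q c2 * c2^2 = a*c2^6 + b*c2^3 + lam := by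
    rw [hQ c2]; field_simp
  have hcube1 : 64*w1^2*(Q c1)^3 = 27*(2*lam + b*w1)^3 := by
    rw [← hc1]
    linear_combination (64*((Q c1*c1^2)^2 + (Q c1*c1^2)*(a*c1^6+b*c1^3+lam)
      + (a*c1^6+b*c1^3+lam)^2))*hQc1 + hA1
  have hcube2 : 64*w2^2*(Q c2)^3 = 27*(2*lam + b*w2)^3 := by
    rw [← hc2]
    linear_combination (64*((Q c2*c2^2)^2 + (Q c2*c2^2)*(a*c2^6+b*c2^3+lam)
      + (a*c2^6+b*c2^3+lam)^2))*hQc2 + hA2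
  have hMM : (2*lam + b*w1)^3*w2^2 = (2*lam + b*w2)^3*w1^2 := by
    linear_combination (-w2^2*hcube1 + w1^2*hcube2 + 64*w1^2*w2^2*hVcube)/27
  have hb' : b = -(4*a*(w1+w2)) := by linear_combination hb4
  have hl' : lam = -(2*a*(w1*w2)) := by linear_combination hl2
  have hkey : 64*a^3*w1^2*w2^2*(w1-w2)^3*(w1+w2) = 0 := by
    rw [hb', hl'] at hMM
    linear_combination -hMM
  have hsum0 : w1 + w2 = 0 := by
    have h64 : (64:ℂ) ≠ 0 := by norm_num
    have hprod : 64*a^3*w1^2*w2^2*(w1-w2)^3 ≠ 0 := by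
      apply mul_ne_zero
      apply mul_ne_zero
      apply mul_ne_zero
      apply mul_ne_zero h64 (pow_ne_zero _ ha)
      exact pow_ne_zero _ hw10
      exact pow_ne_zero _ hw20
      exact pow_ne_zero _ (sub_ne_zero.2 hww)
    rcases mul_eq_zero.1 hkey with h' | h'
    · exact absurd h' hprod
    · exact h'
  have hb0 : b = 0 := by rw [hb', hsum0]; ring
  refine ⟨hb0, ?_⟩
  intro s hs z hz
  have hs0 : s ≠ 0 := by
    intro h; rw [h] at hs; simp at hs
  rw [hQ, hb0]
  field_simp
  linear_combination (z^6*s^3 - lam) * hs
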